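/- Let D be a 2-strong digraph of order n ≥ 3 containing at most one pair of non-adjacent vertices. Then D is Hamiltonian. -/

import Mathlib

variable {V : Type} [Fintype V] [DecidableEq V]

/-- Two distinct vertices are adjacent if there is an arc in at least one direction. -/
def DAdj (A : V → V → Prop) (x y : V) : Prop := A x y ∨ A y x

/-- Out-degree. -/
def outDeg (A : V → V → Prop) [DecidableRel A] (x : V) : ℕ :=
  (Finset.univ.filter fun y => A x y).card

/-- In-degree. -/
def inDeg (A : V → V → Prop) [DecidableRel A] (x : V) : ℕ :=
  (Finset.univ.filter fun y => A y x).card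

/-- Total degree d(x) = d⁺(x) + d⁻(x). -/
def deg (A : V → V → Prop) [DecidableRel A] (x : V) : ℕ :=
  outDeg A x + inDeg A x

/-- d(x, S): number of arcs between x and S, in both directions. -/
def degOn (A : V → V → Prop) [DecidableRel A] (x : V) (S : Finset V) : ℕ :=
  (S.filter fun y => A x y).card + (S.filter fun y => A y x).card

/-- Strong connectivity within a set S: any two vertices of S are joined by a
directed path all of whose vertices lie in S. -/
def StrongOn (A : V → V → Prop) (S : Set V) : Prop :=
  ∀ u ∈ S, ∀ v ∈ S, Relation.ReflTransGen (fun a b => a ∈ S ∧ b ∈ S ∧ A a b) u v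

/-- Strongly connected digraph. -/
def DStrong (A : V → V → Prop) : Prop := StrongOn A Set.univ

/-- 2-strongly connected digraph. -/
def TwoStrong (A : V → V → Prop) : Prop :=
  3 ≤ Fintype.card V ∧ ∀ w : V, StrongOn A {v | v ≠ w}

/-- A directed simple cycle of length m, given as an injective map from `ZMod m`
with consecutive vertices joined by arcs. -/
def IsCycle (A : V → V → Prop) (m : ℕ) (f : ZMod m → V) : Prop :=
  2 ≤ m ∧ Function.Injective f ∧ ∀ i : ZMod m, A (f i) (f (i + 1))

/-- Hamiltonian digraph: a cycle through all vertices. -/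
def Hamiltonian (A : V → V → Prop) : Prop :=
  ∃ f : ZMod (Fintype.card V) → V, IsCycle A (Fintype.card V) f

/-- A Hamiltonian path: a directed path through all vertices. -/
def HamPath (A : V → V → Prop) : Prop :=
  ∃ p : Fin (Fintype.card V) → V, Function.Injective p ∧
    ∀ i : Fin (Fintype.card V), ∀ h : i.val + 1 < Fintype.card V,
      A (p i) (p ⟨i.val + 1, h⟩)

/-- Condition (M): the degree sums over any two distinct pairs of non-adjacent
vertices total at least 4n - 3. -/
def CondM (A : V → V → Prop) [DecidableRel A] : Prop :=
  ∀ x y w z : V, x ≠ y → w ≠ z → ¬ DAdj A x y → ¬ DAdj A w z →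
    ({x, y} : Finset V) ≠ ({w, z} : Finset V) →
    4 * Fintype.card V - 3 ≤ deg A x + deg A y + deg A w + deg A z


open List Relation
def IsCyc {α : Type*} (R : α → α → Prop) (l : List α) : Prop :=
  2 ≤ l.length ∧ l.Nodup ∧ List.IsChain R (l ++ l.take 1)



section Lib
variable {α : Type*} {R : α → α → Prop} {x y : α}

/-- nodup chain path from ReflTransGen -/
theorem exists_nodup_chain (h : ReflTransGen R x y) :
    ∃ l : List α, l ≠ [] ∧ l.head? = some x ∧ l.getLast? = some y ∧ l.IsChain R ∧ l.Nodup := by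
  induction h using ReflTransGen.head_induction_on with
  | refl => exact ⟨[y], by simp⟩
  | head h' _ ih =>
    obtain ⟨l, hne, hh, hl, hc, hnd⟩ := ih
    rename_i a c _
    by_cases hm : a ∈ l
    · obtain ⟨s, t, rfl⟩ := List.append_of_mem hm
      refine ⟨a :: t, by simp, by simp, ?_, ?_, ?_⟩
      · rw [← List.getLast?_append_of_ne_nil s (l₂ := a :: t) (by simp)]; exact hl
      · exact hc.right_of_append
      · exact (List.nodup_append.mp hnd).2.1
    · refine ⟨a :: l, by simp, by simp, ?_, ?_, by simp [hnd, hm]⟩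
      · cases l with
        | nil => simp at hne
        | cons b l' => rw [List.getLast?_cons_cons]; exact hl
      · cases l with
        | nil => simp
        | cons b l' =>
          simp only [List.head?_cons, Option.some_inj] at hh
          subst hh
          exact hc.cons_cons h'
end Lib


section Lib
variable {α : Type*} {R : α → α → Prop} {x y : α} {l l₁ l₂ : List α}


theorem crossing {S : α → Prop} (h : ReflTransGen R x y) (hx : S x) (hy : ¬ S y) :
    ∃ u w, S u ∧ ¬ S w ∧ R u w := by
  induction h using ReflTransGen.head_induction_on with
  | refl => exact absurd hx hy
  | head h' _ ih =>
    rename_i a c _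
    by_cases hc : S c
    · exact ih hc
    · exact ⟨a, c, hx, hc, h'⟩

theorem first_step (h : ReflTransGen R x y) (hxy : x ≠ y) : ∃ z, R x z := by
  induction h using ReflTransGen.head_induction_on with
  | refl => exact absurd rfl hxy
  | head h' _ _ => exact ⟨_, h'⟩

theorem last_step (h : ReflTransGen R x y) (hxy : x ≠ y) : ∃ z, R z y := by
  rcases (ReflTransGen.cases_tail h) with rfl | ⟨z, _, hz⟩
  · exact absurd rfl hxy
  · exact ⟨z, hz⟩

theorem isCyc_rotate (h : IsCyc R (l₁ ++ l₂)) : IsCyc R (l₂ ++ l₁) := by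
  obtain ⟨hlen, hnd, hch⟩ := h
  refine ⟨by simpa [Nat.add_comm] using hlen, by rw [List.nodup_append] at hnd ⊢; tauto, ?_⟩
  rcases l₁ with _ | ⟨x, l₁'⟩
  · simpa using hch
  rcases l₂ with _ | ⟨y, l₂'⟩
  · simpa using hch
  replace hch : IsChain R ((x :: l₁') ++ ((y :: l₂') ++ [x])) := by
    simpa using hch
  show IsChain R (y :: (l₂' ++ x :: l₁' ++ take 1 (y :: (l₂' ++ x :: l₁'))))
  rw [List.isChain_append] at hch
  obtain ⟨c1, c2, bd1⟩ := hch
  rw [List.isChain_append] at c2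
  obtain ⟨c2a, _, bd2⟩ := c2
  suffices h : IsChain R ((y :: l₂') ++ ((x :: l₁') ++ [y])) by simpa using h
  rw [List.isChain_append]
  refine ⟨c2a, ?_, ?_⟩
  · rw [List.isChain_append]
    refine ⟨c1, by simp, ?_⟩
    intro u hu v hv
    simp only [List.head?_cons, Option.mem_def, Option.some_inj] at hv
    subst hv
    exact bd1 u hu y (by simp)
  · intro u hu v hv
    rw [List.head?_append_of_ne_nil _ (by simp : (x :: l₁' : List α) ≠ [])] at hv
    simp only [List.head?_cons, Option.mem_def, Option.some_inj] at hv
    subst hv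
    exact bd2 u hu x (by simp)
end Lib


section Lib
variable {α : Type*} {R : α → α → Prop} {x y v : α} {l l₁ l₂ : List α}


theorem chain'_insert_mid {m₁ m₂ : List α} (h : IsChain R (m₁ ++ x :: y :: m₂))
    (h1 : R x v) (h2 : R v y) : IsChain R (m₁ ++ x :: v :: y :: m₂) := by
  rw [List.isChain_append] at h ⊢
  obtain ⟨c1, c2, bd⟩ := h
  rw [List.isChain_cons_cons] at c2
  refine ⟨c1, ?_, ?_⟩
  · rw [List.isChain_cons_cons, List.isChain_cons_cons]
    exact ⟨h1, h2, c2.2⟩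
  · intro u hu w hw
    simp only [List.head?_cons, Option.mem_def, Option.some_inj] at hw
    subst hw
    exact bd u hu x (by simp)

theorem isCyc_insert_mid (h : IsCyc R (l₁ ++ x :: y :: l₂)) (h1 : R x v) (h2 : R v y)
    (hv : v ∉ l₁ ++ x :: y :: l₂) : IsCyc R (l₁ ++ x :: v :: y :: l₂) := by
  obtain ⟨hlen, hnd, hch⟩ := h
  have hperm : (l₁ ++ x :: v :: y :: l₂).Perm (v :: (l₁ ++ x :: y :: l₂)) := by
    have := List.perm_middle (a := v) (l₁ := l₁ ++ [x]) (l₂ := y :: l₂)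
    simpa using this
  refine ⟨?_, ?_, ?_⟩
  · simp only [List.length_append, List.length_cons] at hlen ⊢; omega
  · rw [hperm.nodup_iff, List.nodup_cons]; exact ⟨hv, hnd⟩
  · have ht : (l₁ ++ x :: v :: y :: l₂).take 1 = (l₁ ++ x :: y :: l₂).take 1 := by
      cases l₁ <;> simp
    rw [ht]
    have := chain'_insert_mid (m₁ := l₁) (m₂ := l₂ ++ (l₁ ++ x :: y :: l₂).take 1)
      (by simpa using hch) h1 h2
    simpa using this

theorem around (hsemi : ∀ a b : α, a ≠ b → R a b ∨ R b a) :
    ∀ (xs p : List α) (x : α), IsCyc R (p ++ x :: xs) →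
    (∀ l', IsCyc R l' → l'.length ≤ (p ++ x :: xs).length) →
    v ∉ p ++ x :: xs → R x v → ∀ y ∈ xs, R y v := by
  intro xs
  induction xs with
  | nil => intro p x _ _ _ _ y hy; simp at hy
  | cons y ys ih =>
    intro p x hcyc hbig hv hxv z hz
    have hxy : R x y := by
      have : IsChain R ((p ++ x :: y :: ys) ++ (p ++ x :: y :: ys).take 1) := hcyc.2.2
      have hinf : [x, y] <:+: (p ++ x :: y :: ys) ++ (p ++ x :: y :: ys).take 1 :=
        ⟨p, ys ++ (p ++ x :: y :: ys).take 1, by simp⟩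
      have := this.infix hinf
      rw [List.isChain_cons_cons] at this; exact this.1
    have hyv : R y v := by
      by_cases hvy : R v y
      · exfalso
        have hbigger := isCyc_insert_mid hcyc hxv hvy hv
        have := hbig _ hbigger
        simp only [List.length_append, List.length_cons] at this; omega
      · refine (hsemi y v (fun hh => ?_)).resolve_right hvy
        exact hv (hh ▸ (by simp : y ∈ p ++ x :: y :: ys))
    rcases List.mem_cons.mp hz with rfl | hz
    · exact hyv
    · exact ih (p ++ [x]) y (by simpa using hcyc) (by simpa using hbig) (by simpa using hv) hyv z hz
end Lib


section Lib
variable {α : Type*} {R : α → α → Prop} {x y v : α} {l l₁ l₂ : List α}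







theorem arc_exists (h : ReflTransGen R x y) (hxy : x ≠ y) : ∃ u w, u ≠ w ∧ R u w := by
  induction h using ReflTransGen.head_induction_on with
  | refl => exact absurd rfl hxy
  | head h' htail ih =>
    rename_i a c
    by_cases hac : a = c
    · subst hac; exact ih hxy
    · exact ⟨a, c, hac, h'⟩

variable [Fintype α]

theorem camion (hsemi : ∀ a b : α, a ≠ b → R a b ∨ R b a)
    (hstrong : ∀ a b : α, ReflTransGen R a b) (hcard : 2 ≤ Fintype.card α) :
    ∃ l : List α, IsCyc R l ∧ l.length = Fintype.card α := by
  classical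
  -- base cycle
  obtain ⟨x₁, y₁, hxy1⟩ := Fintype.exists_pair_of_one_lt_card (α := α) (by omega)
  obtain ⟨u, w, huw, harc⟩ := arc_exists (hstrong x₁ y₁) hxy1
  obtain ⟨l₀, hne, hh, hlst, hch, hnd⟩ := exists_nodup_chain (hstrong w u)
  have hbase : IsCyc R l₀ := by
    refine ⟨?_, hnd, ?_⟩
    · rcases l₀ with _ | ⟨z, _ | ⟨z', t⟩⟩
      · simp at hne
      · simp at hh hlst; exfalso; exact huw (hlst ▸ hh ▸ rfl)
      · simp [Nat.succ_le_succ]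
    · have ht : l₀.take 1 = [w] := by
        rcases l₀ with _ | ⟨z, t⟩
        · simp at hne
        · simp at hh; simp [hh]
      rw [ht, List.isChain_append]
      refine ⟨hch, by simp, ?_⟩
      intro p hp q hq
      simp only [List.head?_cons, Option.mem_def, Option.some_inj] at hq
      subst hq
      rw [Option.mem_def, hlst, Option.some_inj] at hp
      subst hp; exact harc
  -- maximal cycle
  have hSne : ∃ k ∈ Finset.range (Fintype.card α + 1),
      (∃ l : List α, IsCyc R l ∧ l.length = k) := by
    exact ⟨l₀.length, Finset.mem_range.mpr (Nat.lt_succ_of_le hbase.2.1.length_le_card),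
      l₀, hbase, rfl⟩
  set S : Finset ℕ := (Finset.range (Fintype.card α + 1)).filter
    (fun k => ∃ l : List α, IsCyc R l ∧ l.length = k) with hS
  have hSne' : S.Nonempty := ⟨l₀.length, by
    simp only [hS, Finset.mem_filter]
    exact ⟨Finset.mem_range.mpr (Nat.lt_succ_of_le hbase.2.1.length_le_card), l₀, hbase, rfl⟩⟩
  obtain ⟨l, hl, hlen⟩ : ∃ l : List α, IsCyc R l ∧ l.length = S.max' hSne' := by
    have := S.max'_mem hSne'
    simp only [hS, Finset.mem_filter] at this
    exact this.2
  have hbig : ∀ l' : List α, IsCyc R l' → l'.length ≤ l.length := by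
    intro l' hl'
    rw [hlen]
    exact S.le_max' _ (by
      simp only [hS, Finset.mem_filter]
      exact ⟨Finset.mem_range.mpr (Nat.lt_succ_of_le hl'.2.1.length_le_card), l', hl', rfl⟩)
  refine ⟨l, hl, ?_⟩
  by_contra hne'
  have hlt : l.length < Fintype.card α := lt_of_le_of_ne hl.2.1.length_le_card hne'
  obtain ⟨v₀, hv₀⟩ : ∃ v₀, v₀ ∉ l := by
    by_contra hall
    push_neg at hall
    have : (Finset.univ : Finset α) ⊆ l.toFinset := fun z _ => List.mem_toFinset.mpr (hall z)
    have := Finset.card_le_card this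
    rw [List.toFinset_card_of_nodup hl.2.1] at this
    simp only [Finset.card_univ] at this
    omega
  have c1 : ∀ v ∉ l, (∃ x ∈ l, R x v) → ∀ y ∈ l, R y v := by
    intro v hv hex y hy
    obtain ⟨x, hx, hxv⟩ := hex
    obtain ⟨s, t, rfl⟩ := List.append_of_mem hx
    have hrot : IsCyc R (x :: (t ++ s)) := by
      have := isCyc_rotate (l₁ := s) (l₂ := x :: t) hl
      simpa using this
    have hbig' : ∀ l', IsCyc R l' → l'.length ≤ ([] ++ x :: (t ++ s)).length := by
      intro l' h'
      have := hbig l' h'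
      simp only [List.length_append, List.length_cons, List.nil_append] at this ⊢
      omega
    have hvm : v ∉ [] ++ x :: (t ++ s) := by
      simp only [List.nil_append, List.mem_cons, List.mem_append]
      intro h
      apply hv
      simp only [List.mem_append, List.mem_cons]
      tauto
    have hall := around hsemi (t ++ s) [] x (by simpa using hrot) hbig' hvm hxv
    rcases List.mem_append.mp hy with hy | hy
    · exact hall y (by simp [hy])
    · rcases List.mem_cons.mp hy with rfl | hy
      · exact hxv
      · exact hall y (by simp [hy])
  have c2 : ∀ v ∉ l, (∀ y ∈ l, R y v) ∨ (∀ y ∈ l, R v y) := by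
    intro v hv
    by_cases h : ∃ x ∈ l, R x v
    · exact Or.inl (c1 v hv h)
    · push_neg at h
      refine Or.inr fun y hy => ?_
      refine (hsemi v y fun hh => ?_).resolve_right (h y hy)
      exact hv (hh ▸ hy)
  have c3 : ∀ v ∉ l, (∀ y ∈ l, R y v) → ∀ y ∈ l, ¬ R v y := by
    intro v hv hin y hy hvy
    obtain ⟨s, t, rfl⟩ := List.append_of_mem hy
    rcases s.eq_nil_or_concat with rfl | ⟨s', p, rfl⟩
    · rcases t.eq_nil_or_concat with rfl | ⟨t', z, rfl⟩
      · have := hl.1; simp at this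
      · have hrot : IsCyc R ([z] ++ (y :: t')) :=
          isCyc_rotate (l₁ := y :: t') (l₂ := [z]) (by simpa using hl)
        have hzv : R z v := hin z (by simp)
        have hvm : v ∉ ([] : List α) ++ z :: y :: t' := by
          simp only [List.nil_append, List.mem_cons]
          intro h
          apply hv
          simp only [List.nil_append, List.mem_cons, List.mem_append, List.mem_singleton,
            List.concat_eq_append]
          tauto
        have hbigger := isCyc_insert_mid (l₁ := []) (x := z) (y := y) (l₂ := t')
          (by simpa using hrot) hzv hvy hvm
        have := hbig _ hbigger
        simp only [List.length_append, List.length_cons, List.nil_append,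
          List.length_singleton, List.length_concat] at this
        omega
    · have hpv : R p v := hin p (by simp)
      have hvm : v ∉ s' ++ p :: y :: t := by
        intro h
        apply hv
        simp only [List.mem_append, List.mem_cons, List.mem_singleton,
          List.concat_eq_append] at h ⊢
        tauto
      have hbigger := isCyc_insert_mid (l₁ := s') (x := p) (y := y) (l₂ := t)
        (by simpa [List.concat_eq_append, List.append_assoc] using hl) hpv hvy hvm
      have := hbig _ hbigger
      simp only [List.length_append, List.length_cons, List.concat_eq_append,
        List.length_concat, List.length_nil] at this
      omega
  obtain ⟨x₀, xs, rfl⟩ : ∃ x₀ xs, l = x₀ :: xs := by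
    rcases l with _ | ⟨x₀, xs⟩
    · have := hl.1; simp at this
    · exact ⟨x₀, xs, rfl⟩
  have hx₀ : x₀ ∈ x₀ :: xs := by simp
  by_cases hA : ∃ v', v' ∉ x₀ :: xs ∧ (∀ y ∈ x₀ :: xs, R v' y)
  · obtain ⟨v', hv', hallout⟩ := hA
    have hv'S : ¬ (v' ∈ x₀ :: xs ∨ (v' ∉ x₀ :: xs ∧ ∀ y ∈ x₀ :: xs, R y v')) := by
      rintro (h | ⟨_, hin⟩)
      · exact hv' h
      · exact c3 v' hv' hin x₀ hx₀ (hallout x₀ hx₀)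
    obtain ⟨u, u', huS, hu'S, huu'⟩ := crossing (S := fun z => z ∈ x₀ :: xs ∨
      (z ∉ x₀ :: xs ∧ ∀ y ∈ x₀ :: xs, R y z)) (hstrong x₀ v') (Or.inl hx₀) hv'S
    push_neg at hu'S
    obtain ⟨hu'nl, hu'nin⟩ := hu'S
    have hu'ni : ¬ ∀ y ∈ x₀ :: xs, R y u' := by
      intro h
      obtain ⟨y, hy, hny⟩ := hu'nin hu'nl
      exact hny (h y hy)
    have hu'out : ∀ y ∈ x₀ :: xs, R u' y := (c2 u' hu'nl).resolve_left hu'ni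
    have hunl : u ∉ x₀ :: xs := by
      intro hul
      exact hu'ni (c1 u' hu'nl ⟨u, hul, huu'⟩)
    have huin : ∀ y ∈ x₀ :: xs, R y u := by
      rcases huS with h | ⟨_, h⟩
      · exact absurd h hunl
      · exact h
    have huu'ne : u ≠ u' := by
      rintro rfl
      exact hu'ni huin
    have hnew : IsCyc R (x₀ :: u :: u' :: xs) := by
      refine ⟨by simp, ?_, ?_⟩
      · have hnd := List.nodup_cons.mp hl.2.1
        refine List.nodup_cons.mpr ⟨?_, List.nodup_cons.mpr ⟨?_, List.nodup_cons.mpr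
          ⟨?_, hnd.2⟩⟩⟩
        · simp only [List.mem_cons]
          rintro (rfl | rfl | h)
          · exact hunl hx₀
          · exact hu'nl hx₀
          · exact hnd.1 h
        · simp only [List.mem_cons]
          rintro (rfl | h)
          · exact huu'ne rfl
          · exact hunl (by simp [h])
        · intro h
          exact hu'nl (by simp [h])
      · have hch : IsChain R (x₀ :: (xs ++ [x₀])) := by
          have := hl.2.2
          simpa using this
        suffices h : IsChain R (x₀ :: u :: u' :: (xs ++ [x₀])) by simpa using h
        rw [List.isChain_cons_cons, List.isChain_cons_cons]
        refine ⟨huin x₀ hx₀, huu', ?_⟩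
        rw [List.isChain_cons]
        refine ⟨?_, hch.tail⟩
        intro y hy
        apply hu'out
        rcases xs with _ | ⟨z, zs⟩
        · simp only [List.nil_append, List.head?_cons, Option.mem_def, Option.some_inj] at hy
          subst hy; exact hx₀
        · simp only [List.cons_append, List.head?_cons, Option.mem_def, Option.some_inj] at hy
          subst hy; simp
    have := hbig _ hnew
    simp only [List.length_cons] at this
    omega
  · push_neg at hA
    have hallin : ∀ z, z ∉ x₀ :: xs → ∀ y ∈ x₀ :: xs, R y z := by
      intro z hz
      rcases c2 z hz with h | h
      · exact h
      · obtain ⟨y, hy, hny⟩ := hA z hz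
        exact absurd (h y hy) hny
    obtain ⟨u, u', huS, hu'S, huu'⟩ := crossing (S := fun z => z ∉ x₀ :: xs)
      (hstrong v₀ x₀) hv₀ (by simpa using hx₀)
    have hu'l : u' ∈ x₀ :: xs := not_not.mp hu'S
    exact c3 u huS (hallin u huS) u' hu'l huu'



section Conv
variable {V : Type} [Fintype V] {A : V → V → Prop}

theorem isCyc_consec {l : List V} {d : V} (h : IsCyc A l) {k : ℕ} (hk : k + 1 < l.length) :
    A (l.getD k d) (l.getD (k+1) d) := by
  have hch : IsChain A l := h.2.2.left_of_append
  rw [List.isChain_iff_getElem] at hch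
  have := hch k (by omega)
  rw [List.getD_eq_getElem _ _ (by omega), List.getD_eq_getElem _ _ hk]
  exact this

theorem isCyc_wrap {l : List V} {d : V} (h : IsCyc A l) :
    A (l.getD (l.length - 1) d) (l.getD 0 d) := by
  obtain ⟨hlen, _, hch⟩ := h
  have hne : l ≠ [] := by rintro rfl; simp at hlen
  have h0 : 0 < l.length := by omega
  have htake : l.take 1 = [l[0]] := by
    rcases l with _ | ⟨x, t⟩
    · simp at hlen
    · simp
  rw [htake, List.isChain_append] at hch
  have hbd := hch.2.2
  have hlast : l.getLast? = some (l[l.length - 1]'(by omega)) := by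
    rw [List.getLast?_eq_getElem?]
    exact List.getElem?_eq_getElem (by omega)
  have := hbd _ (by rw [hlast]; rfl) l[0] (by simp)
  rw [List.getD_eq_getElem _ _ (by omega : l.length - 1 < l.length),
    List.getD_eq_getElem _ _ h0]
  exact this

theorem isCyc_to_hamiltonian {l : List V} (h : IsCyc A l)
    (hlen : l.length = Fintype.card V) :
    ∃ f : ZMod (Fintype.card V) → V, 2 ≤ Fintype.card V ∧ Function.Injective f ∧
      ∀ i : ZMod (Fintype.card V), A (f i) (f (i + 1)) := by
  have h2 : 2 ≤ Fintype.card V := hlen ▸ h.1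
  haveI : NeZero (Fintype.card V) := ⟨by omega⟩
  haveI : Fact (1 < Fintype.card V) := ⟨by omega⟩
  have hvlt : ∀ i : ZMod (Fintype.card V), i.val < l.length := by
    intro i; rw [hlen]; exact ZMod.val_lt i
  obtain ⟨d⟩ : Nonempty V := Fintype.card_pos_iff.mp (by omega)
  refine ⟨fun i => l.getD i.val d, h2, ?_, ?_⟩
  · intro i j hij
    simp only [List.getD_eq_getElem _ _ (hvlt i), List.getD_eq_getElem _ _ (hvlt j)] at hij
    have := (List.Nodup.get_inj_iff h.2.1
      (i := ⟨i.val, hvlt i⟩) (j := ⟨j.val, hvlt j⟩)).mp (by simpa using hij)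
    exact ZMod.val_injective _ (by simpa using this)
  · intro i
    show A (l.getD i.val d) (l.getD (i + 1).val d)
    by_cases hi : i.val + 1 < l.length
    · have hi' : i.val + 1 < Fintype.card V := by omega
      have hv1 : (i + 1).val = i.val + 1 := by
        rw [ZMod.val_add, ZMod.val_one]
        exact Nat.mod_eq_of_lt hi'
      rw [hv1]
      exact isCyc_consec h hi
    · have hieq : i.val = l.length - 1 := by have := hvlt i; omega
      have hv1 : (i + 1).val = 0 := by
        rw [ZMod.val_add, ZMod.val_one]
        have h3 : i.val + 1 = Fintype.card V := by have := hvlt i; omega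
        rw [h3, Nat.mod_self]
      rw [hv1, hieq]
      exact isCyc_wrap h
end Conv

section Lift
variable {V : Type} {A : V → V → Prop}

theorem lift_strong {S : Set V} {u v : V} (hu : u ∈ S)
    (h : ReflTransGen (fun a b => a ∈ S ∧ b ∈ S ∧ A a b) u v) :
    ∀ hv : v ∈ S, ReflTransGen (fun x y : S => A x.1 y.1) ⟨u, hu⟩ ⟨v, hv⟩ := by
  induction h with
  | refl => intro hv; exact .refl
  | tail hab hbc ih => intro hv; exact .tail (ih hbc.1) hbc.2.2

theorem pair_eq {a b x y : V} [DecidableEq V] (hxy : x ≠ y)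
    (h : ({x, y} : Finset V) = {a, b}) : (x = a ∧ y = b) ∨ (x = b ∧ y = a) := by
  have hx : x ∈ ({a, b} : Finset V) := by rw [← h]; simp
  have hy : y ∈ ({a, b} : Finset V) := by rw [← h]; simp
  simp only [Finset.mem_insert, Finset.mem_singleton] at hx hy
  rcases hx with rfl | rfl <;> rcases hy with rfl | rfl
  · exact absurd rfl hxy
  · exact Or.inl ⟨rfl, rfl⟩
  · exact Or.inr ⟨rfl, rfl⟩
  · exact absurd rfl hxy
end Lift



section Blocks
variable {V : Type} {A : V → V → Prop} {w : ℕ → V} {m : ℕ}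

theorem perm_swap_mid {α : Type*} {S Y : List α} (Z : List α) :
    (S ++ (Y ++ Z)).Perm (Y ++ (S ++ Z)) := by
  have h1 : S ++ (Y ++ Z) = (S ++ Y) ++ Z := (List.append_assoc _ _ _).symm
  have h2 : (Y ++ S) ++ Z = Y ++ (S ++ Z) := List.append_assoc _ _ _
  rw [h1, ← h2]
  exact List.Perm.append_right Z List.perm_append_comm

theorem Wsplit (w : ℕ → V) (s k₁ k₂ : ℕ) :
    (List.range' s k₁ 1).map w ++ (List.range' (s + k₁) k₂ 1).map w
      = (List.range' s (k₁ + k₂) 1).map w := by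
  rw [← List.map_append]
  congr 1
  have := List.range'_append (s := s) (m := k₁) (n := k₂) (step := 1)
  rw [one_mul] at this
  exact this

theorem Wsplit' (w : ℕ → V) (s k₁ k₂ j : ℕ) (h : s + k₁ = j) :
    (List.range' s k₁ 1).map w ++ (List.range' j k₂ 1).map w
      = (List.range' s (k₁ + k₂) 1).map w := by
  subst h; exact Wsplit w s k₁ k₂

theorem chainW (harc : ∀ k, k + 1 < m → A (w k) (w (k+1))) (s k : ℕ) (h : s + k ≤ m) :
    IsChain A ((List.range' s k 1).map w) := by
  rw [List.isChain_iff_getElem]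
  intro i hi
  simp only [List.length_map, List.length_range'] at hi
  simp only [List.get_eq_getElem, List.getElem_map, List.getElem_range', one_mul]
  have : s + (i + 1) = (s + i) + 1 := by omega
  rw [this]
  exact harc (s + i) (by omega)

theorem headW (s k : ℕ) (hk : 0 < k) :
    ((List.range' s k 1).map w).head? = some (w s) := by
  obtain ⟨k', rfl⟩ : ∃ k', k = k' + 1 := ⟨k - 1, by omega⟩
  rw [List.range'_succ]
  simp

theorem lastW (s k : ℕ) (hk : 0 < k) :
    ((List.range' s k 1).map w).getLast? = some (w (s + k - 1)) := by
  rw [List.getLast?_eq_getElem?]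
  have hlen : ((List.range' s k 1).map w).length = k := by simp
  rw [hlen]
  rw [List.getElem?_eq_getElem (by simp; omega)]
  simp only [List.getElem_map, List.getElem_range', one_mul]
  congr 2
  omega

theorem neW (s k : ℕ) (hk : 0 < k) : ((List.range' s k 1).map w) ≠ [] := by
  obtain ⟨k', rfl⟩ : ∃ k', k = k' + 1 := ⟨k - 1, by omega⟩
  rw [List.range'_succ]
  simp

theorem build_cyc {x y : V} {P₁ P₂ : List V}
    (hx1 : x ∉ P₁) (hx2 : x ∉ P₂) (hy1 : y ∉ P₁) (hy2 : y ∉ P₂) (hxy : x ≠ y)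
    (hnd : (P₁ ++ P₂).Nodup)
    (h1ne : P₁ ≠ []) (h2ne : P₂ ≠ [])
    (hc₁ : IsChain A P₁) (hc₂ : IsChain A P₂)
    (hxh : ∀ u ∈ P₁.head?, A x u) (h1y : ∀ u ∈ P₁.getLast?, A u y)
    (hyh : ∀ u ∈ P₂.head?, A y u) (h2x : ∀ u ∈ P₂.getLast?, A u x) :
    IsCyc A (x :: (P₁ ++ y :: P₂)) := by
  refine ⟨by simp; omega, ?_, ?_⟩
  · have hperm : (x :: (P₁ ++ y :: P₂)).Perm (x :: y :: (P₁ ++ P₂)) :=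
      List.Perm.cons x List.perm_middle
    rw [hperm.nodup_iff]
    simp only [List.nodup_cons, List.mem_cons, List.mem_append]
    refine ⟨?_, ?_, hnd⟩
    · rintro (rfl | h | h)
      · exact hxy rfl
      · exact hx1 h
      · exact hx2 h
    · rintro (h | h)
      · exact hy1 h
      · exact hy2 h
  · show IsChain A ((x :: (P₁ ++ y :: P₂)) ++ (x :: (P₁ ++ y :: P₂)).take 1)
    simp only [List.take_succ_cons, List.take_zero, List.cons_append]
    rw [List.isChain_cons]
    constructor
    · intro u hu
      rw [List.append_assoc, List.head?_append_of_ne_nil _ h1ne] at hu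
      exact hxh u hu
    · rw [List.append_assoc]
      rw [List.isChain_append]
      refine ⟨hc₁, ?_, ?_⟩
      · show IsChain A (y :: (P₂ ++ [x]))
        rw [List.isChain_cons]
        constructor
        · intro u hu
          rw [List.head?_append_of_ne_nil _ h2ne] at hu
          exact hyh u hu
        · rw [List.isChain_append]
          refine ⟨hc₂, by simp, ?_⟩
          intro u hu v hv
          simp only [List.head?_cons, Option.mem_def, Option.some_inj] at hv
          subst hv
          exact h2x u hu
      · intro u hu v hv
        simp only [List.cons_append, List.head?_cons, Option.mem_def, Option.some_inj] at hv
        subst hv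
        exact h1y u hu
end Blocks










section FS
variable {V : Type} {A : V → V → Prop}

theorem head_arc {x u0 : V} {l : List V} (h : l.head? = some u0) (ha : A x u0) :
    ∀ u ∈ l.head?, A x u := by
  intro u hu; rw [h] at hu
  simp only [Option.mem_def, Option.some_inj] at hu; subst hu; exact ha

theorem last_arc {x u0 : V} {l : List V} (h : l.getLast? = some u0) (ha : A u0 x) :
    ∀ u ∈ l.getLast?, A u x := by
  intro u hu; rw [h] at hu
  simp only [Option.mem_def, Option.some_inj] at hu; subst hu; exact ha

theorem chain_glue {l₁ l₂ : List V} {u0 v0 : V} (h₁ : List.IsChain A l₁)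
    (h₂ : List.IsChain A l₂) (hl : l₁.getLast? = some u0) (hh : l₂.head? = some v0)
    (ha : A u0 v0) : List.IsChain A (l₁ ++ l₂) := by
  rw [List.isChain_append]
  refine ⟨h₁, h₂, ?_⟩
  intro p hp q hq
  rw [hl] at hp; rw [hh] at hq
  simp only [Option.mem_def, Option.some_inj] at hp hq
  subst hp; subst hq; exact ha

theorem final_step (w : ℕ → V) (a b : V) (m s t : ℕ)
    (hm : 3 ≤ m) (hs1 : 1 ≤ s) (hsm : s + 2 ≤ m) (ht1 : 1 ≤ t) (htm : t + 2 ≤ m)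
    (hst : s ≤ t)
    (harc : ∀ k, k + 1 < m → A (w k) (w (k+1)))
    (halow : ∀ k, k < s → A a (w k))
    (hahigh : ∀ k, s ≤ k → k < m → A (w k) a)
    (hanout : ∀ k, s < k → k < m → ¬ A a (w k))
    (hblow : ∀ k, k < t → A b (w k))
    (hbnin : ∀ k, k < t → ¬ A (w k) b)
    (hbhigh : ∀ k, t ≤ k → k < m → A (w k) b)
    (hbnout : ∀ k, t < k → k < m → ¬ A b (w k))
    (hnab : ¬ A a b)
    (hwinj : ∀ k k', k < m → k' < m → w k = w k' → k = k')
    (hwa : ∀ k, k < m → w k ≠ a) (hwb : ∀ k, k < m → w k ≠ b)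
    (hrep : ∀ x : V, x ≠ a → x ≠ b → ∃ k, k < m ∧ w k = x)
    (hstrong : ∀ c u v : V, u ≠ c → v ≠ c →
      ReflTransGen (fun p q => p ≠ c ∧ q ≠ c ∧ A p q) u v)
    (hbuild : ∀ P₁ P₂ : List V, P₁ ≠ [] → P₂ ≠ [] →
      (P₁ ++ P₂).Perm ((List.range' 0 m 1).map w) →
      List.IsChain A P₁ → List.IsChain A P₂ →
      (∀ u ∈ P₁.head?, A a u) → (∀ u ∈ P₁.getLast?, A u b) →
      (∀ u ∈ P₂.head?, A b u) → (∀ u ∈ P₂.getLast?, A u a) → False) : False := by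
  have F1 : ∀ i j, i + 1 < t → s < j → i + 1 < j → j < m → A (w i) (w j) → False := by
    intro i j hit hsj hij hjm harcij
    refine hbuild ((List.range' 0 (i+1) 1).map w ++ (List.range' j (m - j) 1).map w)
      ((List.range' (i+1) (j - (i+1)) 1).map w) ?_ (neW _ _ (by omega)) ?_ ?_
      (chainW harc _ _ (by omega)) ?_ ?_ ?_ ?_
    · intro h
      exact neW (w := w) 0 (i+1) (by omega) (List.append_eq_nil_iff.mp h).1
    · have hp : (((List.range' 0 (i+1) 1).map w ++ (List.range' j (m - j) 1).map w) ++
          (List.range' (i+1) (j - (i+1)) 1).map w).Perm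
          ((List.range' 0 (i+1) 1).map w ++ ((List.range' (i+1) (j - (i+1)) 1).map w ++
            (List.range' j (m - j) 1).map w)) := by
        rw [List.append_assoc]
        exact List.Perm.append_left _ List.perm_append_comm
      have e2 := Wsplit' w (i+1) (j - (i+1)) (m - j) j (by omega)
      have e1 := Wsplit' w 0 (i+1) ((j - (i+1)) + (m - j)) (i+1) (by omega)
      refine hp.trans ?_
      rw [e2, e1]
      have : (i+1) + ((j - (i+1)) + (m - j)) = m := by omega
      rw [this]
    · exact chain_glue (chainW harc _ _ (by omega)) (chainW harc _ _ (by omega))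
        (lastW _ _ (by omega)) (headW _ _ (by omega))
        (by have h0 : 0 + (i+1) - 1 = i := by omega
            rw [h0]; exact harcij)
    · refine head_arc ?_ (halow 0 hs1)
      rw [List.head?_append_of_ne_nil _ (neW _ _ (by omega))]
      exact headW _ _ (by omega)
    · refine last_arc ?_ (hbhigh (m-1) (by omega) (by omega))
      rw [List.getLast?_append_of_ne_nil _ (neW _ _ (by omega))]
      have := lastW (w := w) j (m - j) (by omega)
      rw [this]
      have h0 : j + (m - j) - 1 = m - 1 := by omega
      rw [h0]
    · exact head_arc (headW _ _ (by omega)) (hblow (i+1) hit)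
    · refine last_arc ?_ (hahigh (j-1) (by omega) (by omega))
      have := lastW (w := w) (i+1) (j - (i+1)) (by omega)
      rw [this]
      have h0 : (i+1) + (j - (i+1)) - 1 = j - 1 := by omega
      rw [h0]
  -- ARC1 via cut at w s
  have harc1 : ∃ i j, i < s ∧ s < j ∧ j < m ∧ A (w i) (w j) := by
    have hpath := hstrong (w s) a (w (m-1)) (Ne.symm (hwa s (by omega)))
      (fun h => by have := hwinj (m-1) s (by omega) (by omega) h; omega)
    have hnT : ¬ (w (m-1) = a ∨ ∃ k, k < s ∧ w (m-1) = w k) := by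
      rintro (h | ⟨k, hk, hkeq⟩)
      · exact hwa (m-1) (by omega) h
      · have := hwinj (m-1) k (by omega) (by omega) hkeq
        omega
    obtain ⟨u, u', huT, hu'T, hstep⟩ := crossing
      (S := fun z => z = a ∨ ∃ k, k < s ∧ z = w k) hpath (Or.inl rfl) hnT
    obtain ⟨hune, hu'ne, huu'⟩ := hstep
    push_neg at hu'T
    obtain ⟨hu'a, hu'k⟩ := hu'T
    have hu'b : u' ≠ b := by
      rintro rfl
      rcases huT with rfl | ⟨k, hk, rfl⟩
      · exact hnab huu'
      · exact hbnin k (by omega) huu'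
    obtain ⟨j, hjm, hjw⟩ := hrep u' hu'a hu'b
    have hjs : s < j := by
      rcases Nat.lt_trichotomy j s with h | h | h
      · exact absurd hjw.symm (hu'k j h)
      · exact absurd (h ▸ hjw) (Ne.symm hu'ne)
      · exact h
    rcases huT with rfl | ⟨i, hi, rfl⟩
    · exact absurd (hjw ▸ huu') (hanout j hjs hjm)
    · exact ⟨i, j, hi, hjs, hjm, hjw ▸ huu'⟩
  obtain ⟨i0, j0, hi0, hj0, hj0m, harc0⟩ := harc1
  rcases Nat.lt_or_ge (i0+1) t with hF | hge
  · exact F1 i0 j0 hF hj0 (by omega) hj0m harc0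
  · have hts : t = s := by omega
    subst hts
    have hi0e : i0 = t - 1 := by omega
    subst hi0e
    by_cases hF2 : ∃ i j, i + 1 < t ∧ t < j ∧ j < m ∧ A (w i) (w j)
    · obtain ⟨i, j, h1, h2, h3, h4⟩ := hF2
      exact F1 i j h1 h2 (by omega) h3 h4
    · push_neg at hF2
      have hpath := hstrong (w (t-1)) a (w (m-1)) (Ne.symm (hwa (t-1) (by omega)))
        (fun h => by have := hwinj (m-1) (t-1) (by omega) (by omega) h; omega)
      have hnT : ¬ (w (m-1) = a ∨ w (m-1) = b ∨ ∃ k, k < t - 1 ∧ w (m-1) = w k) := by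
        rintro (h | h | ⟨k, hk, hkeq⟩)
        · exact hwa (m-1) (by omega) h
        · exact hwb (m-1) (by omega) h
        · have := hwinj (m-1) k (by omega) (by omega) hkeq
          omega
      obtain ⟨u, u', huT, hu'T, hstep⟩ := crossing
        (S := fun z => z = a ∨ z = b ∨ ∃ k, k < t - 1 ∧ z = w k) hpath (Or.inl rfl) hnT
      obtain ⟨hune, hu'ne, huu'⟩ := hstep
      push_neg at hu'T
      obtain ⟨hu'a, hu'b, hu'k⟩ := hu'T
      obtain ⟨j', hj'm, hj'w⟩ := hrep u' hu'a hu'b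
      have hj's : t ≤ j' := by
        rcases Nat.lt_or_ge j' t with h | h
        · rcases Nat.lt_trichotomy j' (t-1) with h2 | h2 | h2
          · exact absurd hj'w.symm (hu'k j' h2)
          · exact absurd (h2 ▸ hj'w) (Ne.symm hu'ne)
          · omega
        · exact h
      -- common pieces for the three constructions
      have harct1 : A (w (t-1)) (w j0) := harc0
      rcases huT with hue | hue | ⟨i', hi', hi'w⟩
      · -- u = a ⇒ A a (w t), dagger 2
        have huu2 : A a u' := hue ▸ huu'
        have hj'e : j' = t := by
          by_contra h
          exact hanout j' (by omega) hj'm (hj'w ▸ huu2)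
        have hats : A a (w t) := by rw [hj'e] at hj'w; exact hj'w ▸ huu2
        refine hbuild ((List.range' t (j0 - t) 1).map w)
          ((List.range' 0 t 1).map w ++ (List.range' j0 (m - j0) 1).map w)
          (neW _ _ (by omega)) ?_ ?_ (chainW harc _ _ (by omega)) ?_ ?_ ?_ ?_ ?_
        · intro h
          exact neW (w := w) 0 t (by omega) (List.append_eq_nil_iff.mp h).1
        · have hp := perm_swap_mid (S := (List.range' t (j0 - t) 1).map w)
            (Y := (List.range' 0 t 1).map w) ((List.range' j0 (m - j0) 1).map w)
          refine hp.trans ?_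
          have e2 := Wsplit' w t (j0 - t) (m - j0) j0 (by omega)
          have e1 := Wsplit' w 0 t ((j0 - t) + (m - j0)) t (by omega)
          rw [e2, e1]
          have : t + ((j0 - t) + (m - j0)) = m := by omega
          rw [this]
        · exact chain_glue (chainW harc _ _ (by omega)) (chainW harc _ _ (by omega))
            (lastW _ _ (by omega)) (headW _ _ (by omega))
            (by have h0 : 0 + t - 1 = t - 1 := by omega
                rw [h0]; exact harct1)
        · exact head_arc (headW _ _ (by omega)) hats
        · refine last_arc ?_ (hbhigh (j0-1) (by omega) (by omega))
          have := lastW (w := w) t (j0 - t) (by omega)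
          rw [this]
          have h0 : t + (j0 - t) - 1 = j0 - 1 := by omega
          rw [h0]
        · refine head_arc ?_ (hblow 0 (by omega))
          rw [List.head?_append_of_ne_nil _ (neW _ _ (by omega))]
          exact headW _ _ (by omega)
        · refine last_arc ?_ (hahigh (m-1) (by omega) (by omega))
          rw [List.getLast?_append_of_ne_nil _ (neW _ _ (by omega))]
          have := lastW (w := w) j0 (m - j0) (by omega)
          rw [this]
          have h0 : j0 + (m - j0) - 1 = m - 1 := by omega
          rw [h0]
      · -- u = b ⇒ A b (w t), dagger 1
        have huu2 : A b u' := hue ▸ huu'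
        have hj'e : j' = t := by
          by_contra h
          exact hbnout j' (by omega) hj'm (hj'w ▸ huu2)
        have hbts : A b (w t) := by rw [hj'e] at hj'w; exact hj'w ▸ huu2
        refine hbuild ((List.range' 0 t 1).map w ++ (List.range' j0 (m - j0) 1).map w)
          ((List.range' t (j0 - t) 1).map w)
          ?_ (neW _ _ (by omega)) ?_ ?_ (chainW harc _ _ (by omega)) ?_ ?_ ?_ ?_
        · intro h
          exact neW (w := w) 0 t (by omega) (List.append_eq_nil_iff.mp h).1
        · have hp : (((List.range' 0 t 1).map w ++ (List.range' j0 (m - j0) 1).map w) ++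
              (List.range' t (j0 - t) 1).map w).Perm
              ((List.range' 0 t 1).map w ++ ((List.range' t (j0 - t) 1).map w ++
                (List.range' j0 (m - j0) 1).map w)) := by
            rw [List.append_assoc]
            exact List.Perm.append_left _ List.perm_append_comm
          refine hp.trans ?_
          have e2 := Wsplit' w t (j0 - t) (m - j0) j0 (by omega)
          have e1 := Wsplit' w 0 t ((j0 - t) + (m - j0)) t (by omega)
          rw [e2, e1]
          have : t + ((j0 - t) + (m - j0)) = m := by omega
          rw [this]
        · exact chain_glue (chainW harc _ _ (by omega)) (chainW harc _ _ (by omega))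
            (lastW _ _ (by omega)) (headW _ _ (by omega))
            (by have h0 : 0 + t - 1 = t - 1 := by omega
                rw [h0]; exact harct1)
        · refine head_arc ?_ (halow 0 (by omega))
          rw [List.head?_append_of_ne_nil _ (neW _ _ (by omega))]
          exact headW _ _ (by omega)
        · refine last_arc ?_ (hbhigh (m-1) (by omega) (by omega))
          rw [List.getLast?_append_of_ne_nil _ (neW _ _ (by omega))]
          have := lastW (w := w) j0 (m - j0) (by omega)
          rw [this]
          have h0 : j0 + (m - j0) - 1 = m - 1 := by omega
          rw [h0]
        · exact head_arc (headW _ _ (by omega)) hbts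
        · refine last_arc ?_ (hahigh (j0-1) (by omega) (by omega))
          have := lastW (w := w) t (j0 - t) (by omega)
          rw [this]
          have h0 : t + (j0 - t) - 1 = j0 - 1 := by omega
          rw [h0]
      · -- u = w i', i' < t-1 ⇒ A (w i') (w t), dagger 3
        have huu2 : A (w i') u' := hi'w ▸ huu'
        have hj'e : j' = t := by
          by_contra h
          exact hF2 i' j' (by omega) (by omega) hj'm (hj'w ▸ huu2)
        have hits : A (w i') (w t) := by rw [hj'e] at hj'w; exact hj'w ▸ huu2
        refine hbuild ((List.range' 0 (i'+1) 1).map w ++ (List.range' t (j0 - t) 1).map w)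
          ((List.range' (i'+1) (t - (i'+1)) 1).map w ++ (List.range' j0 (m - j0) 1).map w)
          ?_ ?_ ?_ ?_ ?_ ?_ ?_ ?_ ?_
        · intro h
          exact neW (w := w) 0 (i'+1) (by omega) (List.append_eq_nil_iff.mp h).1
        · intro h
          exact neW (w := w) (i'+1) (t - (i'+1)) (by omega) (List.append_eq_nil_iff.mp h).1
        · have hp : ((((List.range' 0 (i'+1) 1).map w ++ (List.range' t (j0 - t) 1).map w)) ++
              ((List.range' (i'+1) (t - (i'+1)) 1).map w ++ (List.range' j0 (m - j0) 1).map w)).Perm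
              ((List.range' 0 (i'+1) 1).map w ++ ((List.range' (i'+1) (t - (i'+1)) 1).map w ++
                ((List.range' t (j0 - t) 1).map w ++ (List.range' j0 (m - j0) 1).map w))) := by
            rw [List.append_assoc]
            exact List.Perm.append_left _ (perm_swap_mid _)
          refine hp.trans ?_
          have e3 := Wsplit' w t (j0 - t) (m - j0) j0 (by omega)
          have e2 := Wsplit' w (i'+1) (t - (i'+1)) ((j0 - t) + (m - j0)) t (by omega)
          have e1 := Wsplit' w 0 (i'+1) ((t - (i'+1)) + ((j0 - t) + (m - j0))) (i'+1) (by omega)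
          rw [e3, e2, e1]
          have : (i'+1) + ((t - (i'+1)) + ((j0 - t) + (m - j0))) = m := by omega
          rw [this]
        · exact chain_glue (chainW harc _ _ (by omega)) (chainW harc _ _ (by omega))
            (lastW _ _ (by omega)) (headW _ _ (by omega))
            (by have h0 : 0 + (i'+1) - 1 = i' := by omega
                rw [h0]; exact hits)
        · exact chain_glue (chainW harc _ _ (by omega)) (chainW harc _ _ (by omega))
            (lastW _ _ (by omega)) (headW _ _ (by omega))
            (by have h0 : (i'+1) + (t - (i'+1)) - 1 = t - 1 := by omega
                rw [h0]; exact harct1)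
        · refine head_arc ?_ (halow 0 (by omega))
          rw [List.head?_append_of_ne_nil _ (neW _ _ (by omega))]
          exact headW _ _ (by omega)
        · refine last_arc ?_ (hbhigh (j0-1) (by omega) (by omega))
          rw [List.getLast?_append_of_ne_nil _ (neW _ _ (by omega))]
          have := lastW (w := w) t (j0 - t) (by omega)
          rw [this]
          have h0 : t + (j0 - t) - 1 = j0 - 1 := by omega
          rw [h0]
        · refine head_arc ?_ (hblow (i'+1) (by omega))
          rw [List.head?_append_of_ne_nil _ (neW _ _ (by omega))]
          exact headW _ _ (by omega)
        · refine last_arc ?_ (hahigh (m-1) (by omega) (by omega))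
          rw [List.getLast?_append_of_ne_nil _ (neW _ _ (by omega))]
          have := lastW (w := w) j0 (m - j0) (by omega)
          rw [this]
          have h0 : j0 + (m - j0) - 1 = m - 1 := by omega
          rw [h0]
end FS

section BuildHam
variable {V : Type} [Fintype V] {A : V → V → Prop}

theorem build_ham {x y : V} {vs P₁ P₂ : List V}
    (hndvs : vs.Nodup) (hxvs : x ∉ vs) (hyvs : y ∉ vs) (hxy : x ≠ y)
    (hcard : vs.length + 2 = Fintype.card V)
    (hperm : (P₁ ++ P₂).Perm vs)
    (h1ne : P₁ ≠ []) (h2ne : P₂ ≠ [])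
    (hc₁ : IsChain A P₁) (hc₂ : IsChain A P₂)
    (hxh : ∀ u ∈ P₁.head?, A x u) (h1y : ∀ u ∈ P₁.getLast?, A u y)
    (hyh : ∀ u ∈ P₂.head?, A y u) (h2x : ∀ u ∈ P₂.getLast?, A u x) :
    ∃ f : ZMod (Fintype.card V) → V, 2 ≤ Fintype.card V ∧ Function.Injective f ∧
      ∀ i : ZMod (Fintype.card V), A (f i) (f (i + 1)) := by
  have hmem : ∀ z, z ∈ P₁ ∨ z ∈ P₂ → z ∈ vs := by
    intro z hz
    exact hperm.subset (List.mem_append.mpr hz)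
  have hcyc := build_cyc (A := A)
    (fun h => hxvs (hmem x (Or.inl h))) (fun h => hxvs (hmem x (Or.inr h)))
    (fun h => hyvs (hmem y (Or.inl h))) (fun h => hyvs (hmem y (Or.inr h))) hxy
    (hperm.nodup_iff.mpr hndvs) h1ne h2ne hc₁ hc₂ hxh h1y hyh h2x
  refine isCyc_to_hamiltonian hcyc ?_
  have hlp := hperm.length_eq
  simp only [List.length_append] at hlp
  simp only [List.length_cons, List.length_append]
  omega
end BuildHam


/-- Theorem 3.4: a 2-strong digraph of order n ≥ 3 with at most
one pair of non-adjacent vertices is Hamiltonian. -/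
theorem statement_4 (A : V → V → Prop) [DecidableRel A]
    (hloop : ∀ v : V, ¬ A v v)
    (hn : 3 ≤ Fintype.card V)
    (h2 : TwoStrong A)
    (hone : ∀ x y w z : V, x ≠ y → w ≠ z → ¬ DAdj A x y → ¬ DAdj A w z →
      ({x, y} : Finset V) = ({w, z} : Finset V)) :
    Hamiltonian A := by
  classical
  have hstrong2 := h2.2
  have hDstrong : ∀ u v : V, ReflTransGen A u v := by
    intro u v
    have hex : ∃ c : V, c ≠ u ∧ c ≠ v := by
      by_contra hno
      push_neg at hno
      have hsub : (Finset.univ : Finset V) ⊆ {u, v} := by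
        intro z _
        by_cases h : z = u
        · simp [h]
        · simp [hno z h]
      have h1 := Finset.card_le_card hsub
      have h2' : ({u, v} : Finset V).card ≤ 2 :=
        (Finset.card_insert_le _ _).trans (by simp)
      simp only [Finset.card_univ] at h1
      omega
    obtain ⟨c, hcu, hcv⟩ := hex
    have hp := hstrong2 c u (Ne.symm hcu) v (Ne.symm hcv)
    exact Relation.ReflTransGen.lift id (fun p q (hpq : p ≠ c ∧ q ≠ c ∧ A p q) => hpq.2.2) _ _ hp
  by_cases hsemi : ∀ x y : V, x ≠ y → (A x y ∨ A y x)
  · obtain ⟨l, hl, hlen⟩ := camion hsemi hDstrong (by omega)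
    obtain ⟨f, hf1, hf2, hf3⟩ := isCyc_to_hamiltonian hl hlen
    exact ⟨f, hf1, hf2, hf3⟩
  · push_neg at hsemi
    obtain ⟨a, b, hab, hnadj⟩ := hsemi
    have hnab : ¬ A a b := hnadj.1
    have hnba : ¬ A b a := hnadj.2
    have hadj : ∀ x y : V, x ≠ y → ¬(x = a ∧ y = b) → ¬(x = b ∧ y = a) →
        (A x y ∨ A y x) := by
      intro x y hxy h1 h2
      by_contra hno
      push_neg at hno
      have hpq := hone x y a b hxy hab
        (by rintro (h | h); exacts [hno.1 h, hno.2 h])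
        (by rintro (h | h); exacts [hnab h, hnba h])
      rcases pair_eq hxy hpq with ⟨hx, hy⟩ | ⟨hx, hy⟩
      · exact h1 ⟨hx, hy⟩
      · exact h2 ⟨hx, hy⟩
    by_contra hnot
    set S : Set V := {v | v ≠ a} with hS
    haveI : Fintype ↥S := Fintype.ofFinite _
    have hcardS : Fintype.card ↥S = Fintype.card V - 1 := by
      have h1 : Fintype.card ↥S = Fintype.card {x : V // ¬ (x = a)} :=
        Fintype.card_congr (Equiv.subtypeEquivRight (fun x => Iff.rfl))
      rw [h1, Fintype.card_subtype_compl, Fintype.card_subtype_eq]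
    have hsemiS : ∀ x y : ↥S, x ≠ y → (A x.1 y.1 ∨ A y.1 x.1) := by
      intro x y hxy
      refine hadj x.1 y.1 (fun h => hxy (Subtype.ext h)) ?_ ?_
      · rintro ⟨h, -⟩; exact x.2 h
      · rintro ⟨-, h⟩; exact y.2 h
    have hstrongS : ∀ x y : ↥S, ReflTransGen (fun p q : ↥S => A p.1 q.1) x y := by
      rintro ⟨x, hx⟩ ⟨y, hy⟩
      exact lift_strong hx (hstrong2 a x hx y hy) hy
    obtain ⟨ls, hls, hlslen⟩ := camion hsemiS hstrongS (by rw [hcardS]; omega)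
    set l : List V := ls.map Subtype.val with hldef
    have hlnd : l.Nodup := hls.2.1.map Subtype.val_injective
    have hllen : l.length = Fintype.card V - 1 := by
      rw [hldef, List.length_map, hlslen, hcardS]
    have hlcyc : IsCyc A l := by
      refine ⟨by rw [hllen]; omega, hlnd, ?_⟩
      rw [hldef, ← List.map_take (f := Subtype.val), ← List.map_append, List.isChain_map]
      exact hls.2.2
    have hlmem : ∀ x : V, x ≠ a → x ∈ l := by
      intro x hx
      have hall : ∀ z : ↥S, z ∈ ls := by
        intro z
        have he : ls.toFinset = Finset.univ :=
          Finset.eq_univ_of_card _ (by rw [List.toFinset_card_of_nodup hls.2.1, hlslen])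
        rw [← List.mem_toFinset, he]
        exact Finset.mem_univ z
      exact List.mem_map.mpr ⟨⟨x, hx⟩, hall _, rfl⟩
    have hlmem' : ∀ x ∈ l, x ≠ a := by
      intro x hx
      obtain ⟨z, _, rfl⟩ := List.mem_map.mp hx
      exact z.2
    obtain ⟨s0, t0, hsplit⟩ := List.append_of_mem (hlmem b (Ne.symm hab))
    have hcyc2 : IsCyc A (b :: (t0 ++ s0)) := by
      have := isCyc_rotate (l₁ := s0) (l₂ := b :: t0) (hsplit ▸ hlcyc)
      simpa using this
    set vs : List V := t0 ++ s0 with hvs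
    set m : ℕ := vs.length with hmdef
    have hpermL : l.Perm (b :: vs) := by
      rw [hsplit, hvs]
      exact List.perm_middle.trans (List.Perm.cons b List.perm_append_comm)
    have hcard2 : m + 2 = Fintype.card V := by
      have hle := hpermL.length_eq
      rw [hllen] at hle
      simp only [List.length_cons] at hle
      omega
    have hmem2 : ∀ x : V, x ∈ b :: vs ↔ x ≠ a := by
      intro x
      rw [← hpermL.mem_iff]
      exact ⟨hlmem' x, hlmem x⟩
    have hndvs2 := hcyc2.2.1
    have hbvs : b ∉ vs := (List.nodup_cons.mp hndvs2).1
    have hndvs : vs.Nodup := (List.nodup_cons.mp hndvs2).2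
    have havs : a ∉ vs := fun h => ((hmem2 a).mp (List.mem_cons_of_mem _ h)) rfl
    set w : ℕ → V := fun k => vs.getD k b with hwdef
    have hm1 : 1 ≤ m := by omega
    have hwmem : ∀ k, k < m → w k ∈ vs := by
      intro k hk
      rw [hwdef]
      simp only []
      rw [List.getD_eq_getElem _ _ hk]
      exact List.getElem_mem _
    have hwa : ∀ k, k < m → w k ≠ a :=
      fun k hk => (hmem2 _).mp (List.mem_cons_of_mem _ (hwmem k hk))
    have hwb : ∀ k, k < m → w k ≠ b := fun k hk h => hbvs (h ▸ hwmem k hk)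
    have hwinj : ∀ k k', k < m → k' < m → w k = w k' → k = k' := by
      intro k k' hk hk' he
      have hg : vs.get ⟨k, hk⟩ = vs.get ⟨k', hk'⟩ := by
        simp only [List.get_eq_getElem]
        rw [← List.getD_eq_getElem vs b hk, ← List.getD_eq_getElem vs b hk']
        exact he
      have := (hndvs.get_inj_iff).mp hg
      simpa using this
    have hrep : ∀ x : V, x ≠ a → x ≠ b → ∃ k, k < m ∧ w k = x := by
      intro x hxa hxb
      have hx : x ∈ vs := by
        rcases List.mem_cons.mp ((hmem2 x).mpr hxa) with h | h
        · exact absurd h hxb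
        · exact h
      obtain ⟨⟨k, hk⟩, he⟩ := List.mem_iff_get.mp hx
      refine ⟨k, hk, ?_⟩
      rw [hwdef]
      simp only []
      rw [List.getD_eq_getElem _ _ hk]
      simpa using he
    have hconsB : ∀ k, k + 1 < m + 1 → A ((b :: vs).getD k b) ((b :: vs).getD (k+1) b) := by
      intro k hk
      have := isCyc_consec (d := b) hcyc2 (k := k) (by simp only [List.length_cons]; omega)
      simpa using this
    have harc : ∀ k, k + 1 < m → A (w k) (w (k+1)) := by
      intro k hk
      have hx := hconsB (k+1) (by omega)
      rw [List.getD_cons_succ, List.getD_cons_succ] at hx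
      exact hx
    have hbw0 : A b (w 0) := by
      have hx := hconsB 0 (by omega)
      rw [List.getD_cons_zero, List.getD_cons_succ] at hx
      exact hx
    have hwm1b : A (w (m-1)) b := by
      have hwr := isCyc_wrap (d := b) hcyc2
      have hlen3 : (b :: vs).length - 1 = m := by simp [hmdef]
      rw [hlen3] at hwr
      obtain ⟨m', hm'⟩ : ∃ m', m = m' + 1 := ⟨m - 1, by omega⟩
      rw [hm'] at hwr ⊢
      rw [List.getD_cons_succ, List.getD_cons_zero] at hwr
      have h0 : m' + 1 - 1 = m' := by omega
      rw [h0]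
      exact hwr
    have hW0m : (List.range' 0 m 1).map w = vs := by
      apply List.ext_get
      · simp [hmdef]
      · intro n h1' h2'
        simp only [List.get_eq_getElem, List.getElem_map, List.getElem_range', one_mul]
        rw [hwdef]
        simp only []
        rw [List.getD_eq_getElem _ _ (by simpa using h2')]
        congr 1
        omega
    have hbuildg : ∀ (x y : V), x ∉ vs → y ∉ vs → x ≠ y →
        ∀ P₁ P₂ : List V, P₁ ≠ [] → P₂ ≠ [] →
        (P₁ ++ P₂).Perm ((List.range' 0 m 1).map w) →
        List.IsChain A P₁ → List.IsChain A P₂ →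
        (∀ u ∈ P₁.head?, A x u) → (∀ u ∈ P₁.getLast?, A u y) →
        (∀ u ∈ P₂.head?, A y u) → (∀ u ∈ P₂.getLast?, A u x) → False := by
      intro x y hx hy hxy P₁ P₂ h1 h2' hp hc1 hc2 ha1 ha2 ha3 ha4
      rw [hW0m] at hp
      obtain ⟨f, hf1, hf2, hf3⟩ :=
        build_ham hndvs hx hy hxy hcard2 hp h1 h2' hc1 hc2 ha1 ha2 ha3 ha4
      exact hnot ⟨f, hf1, hf2, hf3⟩
    have hINSa : ∀ k, k + 1 < m → A (w k) a → A a (w (k+1)) → False := by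
      intro k hk h1 h2'
      refine hbuildg b a hbvs havs (Ne.symm hab)
        ((List.range' 0 (k+1) 1).map w) ((List.range' (k+1) (m - (k+1)) 1).map w)
        (neW _ _ (by omega)) (neW _ _ (by omega)) ?_
        (chainW harc _ _ (by omega)) (chainW harc _ _ (by omega))
        (head_arc (headW _ _ (by omega)) hbw0) ?_
        (head_arc (headW _ _ (by omega)) h2') ?_
      · rw [Wsplit' w 0 (k+1) (m - (k+1)) (k+1) (by omega)]
        have he : (k+1) + (m - (k+1)) = m := by omega
        rw [he]
      · refine last_arc ?_ h1
        rw [lastW _ _ (by omega)]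
        have h0 : 0 + (k+1) - 1 = k := by omega
        rw [h0]
      · refine last_arc ?_ hwm1b
        rw [lastW _ _ (by omega)]
        have h0 : (k+1) + (m - (k+1)) - 1 = m - 1 := by omega
        rw [h0]
    -- out/in neighbours of a
    have houtA : ∃ k, 1 ≤ k ∧ k < m ∧ A a (w k) := by
      have hp := hstrong2 (w 0) a (Ne.symm (hwa 0 (by omega))) b (Ne.symm (hwb 0 (by omega)))
      obtain ⟨z, hz⟩ := first_step hp hab
      obtain ⟨hz1, hz2, hz3⟩ := hz
      have hza : z ≠ a := fun h => hloop a (h ▸ hz3)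
      have hzb : z ≠ b := fun h => hnab (h ▸ hz3)
      obtain ⟨k, hk, hkw⟩ := hrep z hza hzb
      have hk0 : k ≠ 0 := fun h => hz2 (by rw [← hkw, h])
      exact ⟨k, by omega, hk, hkw ▸ hz3⟩
    have hinA : ∃ k, k < m - 1 ∧ A (w k) a := by
      have hp := hstrong2 (w (m-1)) b (Ne.symm (hwb (m-1) (by omega)))
        a (Ne.symm (hwa (m-1) (by omega)))
      obtain ⟨z, hz⟩ := last_step hp (Ne.symm hab)
      obtain ⟨hz1, hz2, hz3⟩ := hz
      have hza : z ≠ a := fun h => hloop a (h ▸ hz3)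
      have hzb : z ≠ b := fun h => hnba (h ▸ hz3)
      obtain ⟨k, hk, hkw⟩ := hrep z hza hzb
      have hk0 : k ≠ m - 1 := fun h => hz1 (by rw [← hkw, h])
      exact ⟨k, by omega, hkw ▸ hz3⟩
    have hexS : ∃ k, A (w k) a ∧ k < m := by
      obtain ⟨k, hk1, hk2⟩ := hinA
      exact ⟨k, hk2, by omega⟩
    set s : ℕ := Nat.find hexS with hsdef
    obtain ⟨hsA, hsm'⟩ := Nat.find_spec hexS
    have hanin : ∀ k, k < s → ¬ A (w k) a := by
      intro k hk h
      exact Nat.find_min hexS hk ⟨h, by omega⟩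
    have halow : ∀ k, k < s → A a (w k) := by
      intro k hk
      have hne : a ≠ w k := Ne.symm (hwa k (by omega))
      refine (hadj a (w k) hne ?_ ?_).resolve_right (hanin k hk)
      · rintro ⟨-, h⟩; exact hwb k (by omega) h
      · rintro ⟨h, -⟩; exact hab h
    have hahigh : ∀ k, s ≤ k → k < m → A (w k) a := by
      intro k hk
      induction k, hk using Nat.le_induction with
      | base => intro _; exact hsA
      | succ k hk' ih =>
        intro hkm
        have h1 : A (w k) a := ih (by omega)
        by_contra h2'
        have h3 : A a (w (k+1)) := by
          have hne : w (k+1) ≠ a := hwa (k+1) hkm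
          have hA1 : ¬(w (k+1) = a ∧ a = b) := by rintro ⟨h, -⟩; exact hwa (k+1) hkm h
          have hA2 : ¬(w (k+1) = b ∧ a = a) := by rintro ⟨h, -⟩; exact hwb (k+1) hkm h
          exact (hadj (w (k+1)) a hne hA1 hA2).resolve_left h2'
        exact hINSa k hkm h1 h3
    have hanout : ∀ k, s < k → k < m → ¬ A a (w k) := by
      intro k h1 h2' h
      have hk' : (k-1) + 1 = k := by omega
      exact hINSa (k-1) (by omega) (hahigh (k-1) (by omega) (by omega)) (by rw [hk']; exact h)
    have hs1 : 1 ≤ s := by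
      by_contra h
      obtain ⟨k, hk1, hk2, hk3⟩ := houtA
      exact hanout k (by omega) hk2 hk3
    have hsm : s + 2 ≤ m := by
      obtain ⟨k, hk1, hk2⟩ := hinA
      have := Nat.find_le (h := hexS) ⟨hk2, by omega⟩
      omega
    have haw0 : A a (w 0) := halow 0 hs1
    have hwm1a : A (w (m-1)) a := hahigh (m-1) (by omega) (by omega)
    have hINSb : ∀ k, k + 1 < m → A (w k) b → A b (w (k+1)) → False := by
      intro k hk h1 h2'
      refine hbuildg a b havs hbvs hab
        ((List.range' 0 (k+1) 1).map w) ((List.range' (k+1) (m - (k+1)) 1).map w)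
        (neW _ _ (by omega)) (neW _ _ (by omega)) ?_
        (chainW harc _ _ (by omega)) (chainW harc _ _ (by omega))
        (head_arc (headW _ _ (by omega)) haw0) ?_
        (head_arc (headW _ _ (by omega)) h2') ?_
      · rw [Wsplit' w 0 (k+1) (m - (k+1)) (k+1) (by omega)]
        have he : (k+1) + (m - (k+1)) = m := by omega
        rw [he]
      · refine last_arc ?_ h1
        rw [lastW _ _ (by omega)]
        have h0 : 0 + (k+1) - 1 = k := by omega
        rw [h0]
      · refine last_arc ?_ hwm1a
        rw [lastW _ _ (by omega)]
        have h0 : (k+1) + (m - (k+1)) - 1 = m - 1 := by omega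
        rw [h0]
    have houtB : ∃ k, 1 ≤ k ∧ k < m ∧ A b (w k) := by
      have hp := hstrong2 (w 0) b (Ne.symm (hwb 0 (by omega))) a (Ne.symm (hwa 0 (by omega)))
      obtain ⟨z, hz⟩ := first_step hp (Ne.symm hab)
      obtain ⟨hz1, hz2, hz3⟩ := hz
      have hzb : z ≠ b := fun h => hloop b (h ▸ hz3)
      have hza : z ≠ a := fun h => hnba (h ▸ hz3)
      obtain ⟨k, hk, hkw⟩ := hrep z hza hzb
      have hk0 : k ≠ 0 := fun h => hz2 (by rw [← hkw, h])
      exact ⟨k, by omega, hk, hkw ▸ hz3⟩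
    have hinB : ∃ k, k < m - 1 ∧ A (w k) b := by
      have hp := hstrong2 (w (m-1)) a (Ne.symm (hwa (m-1) (by omega)))
        b (Ne.symm (hwb (m-1) (by omega)))
      obtain ⟨z, hz⟩ := last_step hp hab
      obtain ⟨hz1, hz2, hz3⟩ := hz
      have hzb : z ≠ b := fun h => hloop b (h ▸ hz3)
      have hza : z ≠ a := fun h => hnab (h ▸ hz3)
      obtain ⟨k, hk, hkw⟩ := hrep z hza hzb
      have hk0 : k ≠ m - 1 := fun h => hz1 (by rw [← hkw, h])
      exact ⟨k, by omega, hkw ▸ hz3⟩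
    have hexT : ∃ k, A (w k) b ∧ k < m := by
      obtain ⟨k, hk1, hk2⟩ := hinB
      exact ⟨k, hk2, by omega⟩
    set t : ℕ := Nat.find hexT with htdef
    obtain ⟨htB, htm'⟩ := Nat.find_spec hexT
    have hbnin : ∀ k, k < t → ¬ A (w k) b := by
      intro k hk h
      exact Nat.find_min hexT hk ⟨h, by omega⟩
    have hblow : ∀ k, k < t → A b (w k) := by
      intro k hk
      have hne : b ≠ w k := Ne.symm (hwb k (by omega))
      refine (hadj b (w k) hne ?_ ?_).resolve_right (hbnin k hk)
      · rintro ⟨h, -⟩; exact hab h.symm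
      · rintro ⟨-, h⟩; exact hwa k (by omega) h
    have hbhigh : ∀ k, t ≤ k → k < m → A (w k) b := by
      intro k hk
      induction k, hk using Nat.le_induction with
      | base => intro _; exact htB
      | succ k hk' ih =>
        intro hkm
        have h1 : A (w k) b := ih (by omega)
        by_contra h2'
        have h3 : A b (w (k+1)) := by
          have hne : w (k+1) ≠ b := hwb (k+1) hkm
          have hA1 : ¬(w (k+1) = a ∧ b = b) := by rintro ⟨h, -⟩; exact hwa (k+1) hkm h
          have hA2 : ¬(w (k+1) = b ∧ b = a) := by rintro ⟨h, -⟩; exact hwb (k+1) hkm h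
          exact (hadj (w (k+1)) b hne hA1 hA2).resolve_left h2'
        exact hINSb k hkm h1 h3
    have hbnout : ∀ k, t < k → k < m → ¬ A b (w k) := by
      intro k h1 h2' h
      have hk' : (k-1) + 1 = k := by omega
      exact hINSb (k-1) (by omega) (hbhigh (k-1) (by omega) (by omega)) (by rw [hk']; exact h)
    have ht1 : 1 ≤ t := by
      by_contra h
      obtain ⟨k, hk1, hk2, hk3⟩ := houtB
      exact hbnout k (by omega) hk2 hk3
    have htm : t + 2 ≤ m := by
      obtain ⟨k, hk1, hk2⟩ := hinB
      have := Nat.find_le (h := hexT) ⟨hk2, by omega⟩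
      omega
    have hstrongarg : ∀ c u v : V, u ≠ c → v ≠ c →
        ReflTransGen (fun p q => p ≠ c ∧ q ≠ c ∧ A p q) u v := by
      intro c u v hu hv
      exact hstrong2 c u hu v hv
    rcases le_total s t with hle | hle
    · exact final_step w a b m s t (by omega) hs1 hsm ht1 htm hle harc
        halow hahigh hanout hblow hbnin hbhigh hbnout hnab hwinj hwa hwb hrep
        hstrongarg (hbuildg a b havs hbvs hab)
    · exact final_step w b a m t s (by omega) ht1 htm hs1 hsm hle harc
        hblow hbhigh hbnout halow hanin hahigh hanout hnba hwinj hwb hwa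
        (fun x h1 h2' => hrep x h2' h1) hstrongarg (hbuildg b a hbvs havs (Ne.symm hab))
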